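/- Imai–Iri correctness under the Fréchet criterion: let P = ⟨p₁,…,p_n⟩ and suppose Q = ⟨p_{i₀}=p₁, p_{i₁}, …, p_{i_k}=p_n⟩ is a subsequence such that, for each j, the Fréchet distance between the segment p_{i_j}p_{i_{j+1}} and the subpolyline ⟨p_{i_j}, p_{i_j+1}, …, p_{i_{j+1}}⟩ is at most ε. Then the Fréchet distance between the polyline Q and the polyline P is at most ε. -/

import Mathlib

open Set

abbrev E2 := EuclideanSpace ℝ (Fin 2)

/-- A reparametrization: a continuous, monotone nondecreasing map of `[0,1]`
onto `[0,1]`. -/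
def IsRepar (α : ℝ → ℝ) : Prop :=
  ContinuousOn α (Icc 0 1) ∧ MonotoneOn α (Icc 0 1) ∧ α '' Icc 0 1 = Icc 0 1

/-- The Fréchet distance between two curves parametrized over `[0,1]`:
the infimum over pairs of reparametrizations of the sup-distance. -/
noncomputable def frechetDist (f g : ℝ → E2) : ℝ :=
  sInf {r : ℝ | 0 ≤ r ∧ ∃ α β : ℝ → ℝ, IsRepar α ∧ IsRepar β ∧
    ∀ t ∈ Icc (0:ℝ) 1, ‖f (α t) - g (β t)‖ ≤ r}

/-- The constant-speed parametrization of the segment from `a` to `b`. -/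
noncomputable def segCurve (a b : E2) : ℝ → E2 := fun u => a + u • (b - a)

/-- The piecewise-linear curve through `p 0, p 1, …`, parametrized so that
vertex `p k` is reached at time `k`. -/
noncomputable def polyParam (p : ℕ → E2) (t : ℝ) : E2 :=
  p ⌊t⌋₊ + (t - (⌊t⌋₊ : ℝ)) • (p (⌊t⌋₊ + 1) - p ⌊t⌋₊)

/-- The subcurve of the polyline between parameters `s` and `t`,
reparametrized over `[0,1]`. -/
noncomputable def subcurve (p : ℕ → E2) (s t : ℝ) : ℝ → E2 :=
  fun u => polyParam p (s + u * (t - s))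

/-- The polygonal curve on the subsequence `p (j 0), …, p (j k)` of vertices
(a simplification with `k` links), reparametrized over `[0,1]`. -/
noncomputable def simplCurve (p : ℕ → E2) (j : ℕ → ℕ) (k : ℕ) : ℝ → E2 :=
  fun u => polyParam (fun m => p (j (min m k))) (u * k)

/-! ### Auxiliary lemmas -/

lemma isRepar_id' : IsRepar (fun x : ℝ => x) :=
  ⟨continuousOn_id, fun _ _ _ _ h => h, Set.image_id _⟩

lemma IsRepar.mem {α : ℝ → ℝ} (h : IsRepar α) {x : ℝ} (hx : x ∈ Icc (0:ℝ) 1) :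
    α x ∈ Icc (0:ℝ) 1 := by
  rw [← h.2.2]; exact mem_image_of_mem _ hx

lemma endpoints_of_image {γ : ℝ → ℝ} {a b : ℝ}
    (hm : MonotoneOn γ (Icc 0 1)) (hi : γ '' Icc 0 1 = Icc a b) :
    γ 0 = a ∧ γ 1 = b := by
  have h0 : (0:ℝ) ∈ Icc (0:ℝ) 1 := ⟨le_rfl, zero_le_one⟩
  have h1 : (1:ℝ) ∈ Icc (0:ℝ) 1 := ⟨zero_le_one, le_rfl⟩
  have hγ0 : γ 0 ∈ Icc a b := hi ▸ mem_image_of_mem γ h0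
  have hγ1 : γ 1 ∈ Icc a b := hi ▸ mem_image_of_mem γ h1
  have ha : a ∈ γ '' Icc 0 1 := by rw [hi]; exact ⟨le_rfl, hγ0.1.trans hγ0.2⟩
  obtain ⟨x, hx, hxa⟩ := ha
  have hb : b ∈ γ '' Icc 0 1 := by rw [hi]; exact ⟨hγ0.1.trans hγ0.2, le_rfl⟩
  obtain ⟨y, hy, hyb⟩ := hb
  constructor
  · exact le_antisymm (hxa ▸ hm h0 hx hx.1) hγ0.1
  · exact le_antisymm hγ1.2 (hyb ▸ hm hy h1 hy.2)

lemma polyParam_add (q : ℕ → E2) (m : ℕ) {x : ℝ} (hx : x ∈ Icc (0:ℝ) 1) :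
    polyParam q ((m:ℝ) + x) = q m + x • (q (m+1) - q m) := by
  rcases eq_or_lt_of_le hx.2 with h1 | h1
  · subst h1
    have hx1 : (m:ℝ) + 1 = ((m+1:ℕ):ℝ) := by push_cast; ring
    unfold polyParam
    rw [hx1, Nat.floor_natCast]
    simp only [sub_self, zero_smul, add_zero, one_smul]
    abel
  · have hfl : ⌊(m:ℝ) + x⌋₊ = m := by
      rw [Nat.floor_eq_iff (add_nonneg (Nat.cast_nonneg m) hx.1)]
      exact ⟨le_add_of_nonneg_right hx.1, by linarith⟩
    unfold polyParam
    rw [hfl, add_sub_cancel_left]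

lemma exists_piece (g : ℕ → ℝ) (hg : Monotone g) :
    ∀ k, 0 < k → ∀ y, y ∈ Icc (g 0) (g k) → ∃ m, m < k ∧ y ∈ Icc (g m) (g (m+1)) := by
  intro k
  induction k with
  | zero => intro h; exact absurd h (lt_irrefl 0)
  | succ k ih =>
    intro _ y hy
    rcases le_or_gt y (g k) with h | h
    · rcases Nat.eq_zero_or_pos k with rfl | hk
      · exact ⟨0, Nat.one_pos, hy⟩
      · obtain ⟨m, hm, hmy⟩ := ih hk y ⟨hy.1, h⟩
        exact ⟨m, hm.trans (Nat.lt_succ_self k), hmy⟩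
    · exact ⟨k, Nat.lt_succ_self k, le_of_lt h, hy.2⟩

lemma continuousOn_union_closed {f : ℝ → ℝ} {s t : Set ℝ} (hs : IsClosed s) (ht : IsClosed t)
    (hfs : ContinuousOn f s) (hft : ContinuousOn f t) : ContinuousOn f (s ∪ t) := by
  intro x hx
  rcases hx with h | h
  · refine (hfs x h).union ?_
    by_cases hxt : x ∈ t
    · exact hft x hxt
    · exact continuousWithinAt_of_notMem_closure (by rwa [ht.closure_eq])
  · refine ContinuousWithinAt.union ?_ (hft x h)
    by_cases hxs : x ∈ s
    · exact hfs x hxs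
    · exact continuousWithinAt_of_notMem_closure (by rwa [hs.closure_eq])

/-! ### Gluing piecewise reparametrizations -/

noncomputable def glueFun (k : ℕ) (γ : ℕ → ℝ → ℝ) : ℝ → ℝ :=
  fun t => γ (min ⌊(k:ℝ)*t⌋₊ (k-1)) ((k:ℝ)*t - ((min ⌊(k:ℝ)*t⌋₊ (k-1) : ℕ) : ℝ))

lemma u_mem {k : ℕ} (hk : 0 < k) {m : ℕ} {t : ℝ}
    (ht : t ∈ Icc ((m:ℝ)/k) (((m:ℝ)+1)/k)) :
    (k:ℝ)*t - m ∈ Icc (0:ℝ) 1 := by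
  have hk' : (0:ℝ) < k := by exact_mod_cast hk
  have h1 := (div_le_iff₀ hk').mp ht.1
  have h2 := (le_div_iff₀ hk').mp ht.2
  have hc : (k:ℝ)*t = t*k := mul_comm _ _
  constructor <;> [linarith; linarith]

lemma mem_piece_of {k : ℕ} (hk : 0 < k) {t : ℝ} (ht : t ∈ Icc (0:ℝ) 1) :
    ∃ m, m < k ∧ t ∈ Icc ((m:ℝ)/k) (((m:ℝ)+1)/k) := by
  have hk' : (0:ℝ) < k := by exact_mod_cast hk
  have hmono : Monotone (fun m : ℕ => ((min m k : ℕ):ℝ)/k) := by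
    intro x y hxy
    have hxy' : min x k ≤ min y k := min_le_min hxy le_rfl
    have hc : ((min x k : ℕ):ℝ) ≤ ((min y k : ℕ):ℝ) := by exact_mod_cast hxy'
    exact div_le_div_of_nonneg_right hc hk'.le
  obtain ⟨m, hmk, hmem⟩ := exists_piece _ hmono k hk t
    (by
      have e1 : (k:ℝ)/k = 1 := div_self hk'.ne'
      constructor
      · simpa using ht.1
      · simpa [min_self, e1] using ht.2)
  refine ⟨m, hmk, ?_⟩
  have e0 : ((min m k : ℕ):ℝ) = (m:ℝ) := by
    rw [min_eq_left hmk.le]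
  have e1 : ((min (m+1) k : ℕ):ℝ) = (m:ℝ)+1 := by
    rw [min_eq_left (Nat.succ_le_of_lt hmk)]; push_cast; ring
  simpa [e0, e1] using hmem

/-- Evaluation of the glued function on a single piece. -/
lemma glueFun_eval {k : ℕ} {c : ℕ → ℝ} {γ : ℕ → ℝ → ℝ} (hk : 0 < k)
    (hγm : ∀ m < k, MonotoneOn (γ m) (Icc 0 1))
    (hγi : ∀ m < k, γ m '' Icc 0 1 = Icc (c m) (c (m+1)))
    {m : ℕ} (hm : m < k) {t : ℝ}
    (ht : t ∈ Icc ((m:ℝ)/k) (((m:ℝ)+1)/k)) :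
    glueFun k γ t = γ m ((k:ℝ)*t - m) := by
  have hk' : (0:ℝ) < k := by exact_mod_cast hk
  have h1 : (m:ℝ) ≤ (k:ℝ)*t := by
    have := (div_le_iff₀ hk').mp ht.1; linarith [mul_comm (k:ℝ) t]
  have h2 : (k:ℝ)*t ≤ (m:ℝ)+1 := by
    have := (le_div_iff₀ hk').mp ht.2; linarith [mul_comm (k:ℝ) t]
  rcases lt_or_eq_of_le h2 with h2' | h2'
  · have hfl : ⌊(k:ℝ)*t⌋₊ = m := by
      rw [Nat.floor_eq_iff (le_trans (Nat.cast_nonneg m) h1)]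
      exact ⟨h1, by push_cast; linarith⟩
    have hmin : min ⌊(k:ℝ)*t⌋₊ (k-1) = m := by rw [hfl]; omega
    simp only [glueFun, hmin]
  · have hfl : ⌊(k:ℝ)*t⌋₊ = m+1 := by
      have hcast : (m:ℝ)+1 = ((m+1:ℕ):ℝ) := by push_cast; ring
      rw [h2', hcast, Nat.floor_natCast]
    rcases Nat.lt_or_ge (m+1) k with hlt | hge
    · have hmin : min ⌊(k:ℝ)*t⌋₊ (k-1) = m+1 := by rw [hfl]; omega
      have e1 := (endpoints_of_image (hγm (m+1) hlt) (hγi (m+1) hlt)).1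
      have e2 := (endpoints_of_image (hγm m hm) (hγi m hm)).2
      simp only [glueFun, hmin]
      have hx : (k:ℝ)*t - ((m+1:ℕ):ℝ) = 0 := by push_cast; linarith
      have hy : (k:ℝ)*t - (m:ℝ) = 1 := by linarith
      rw [hx, hy, e1, e2]
    · have hmin : min ⌊(k:ℝ)*t⌋₊ (k-1) = m := by rw [hfl]; omega
      simp only [glueFun, hmin]

lemma isRepar_glueFun {k : ℕ} {c : ℕ → ℝ} {γ : ℕ → ℝ → ℝ} (hk : 0 < k)
    (hc0 : c 0 = 0) (hck : c k = 1) (hcm : Monotone c)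
    (hγc : ∀ m < k, ContinuousOn (γ m) (Icc 0 1))
    (hγm : ∀ m < k, MonotoneOn (γ m) (Icc 0 1))
    (hγi : ∀ m < k, γ m '' Icc 0 1 = Icc (c m) (c (m+1))) :
    IsRepar (glueFun k γ) := by
  have hk' : (0:ℝ) < k := by exact_mod_cast hk
  have hbound : ∀ m, m < k → ∀ t ∈ Icc ((m:ℝ)/k) (((m:ℝ)+1)/k),
      glueFun k γ t ∈ Icc (c m) (c (m+1)) := by
    intro m hm t ht
    rw [glueFun_eval hk hγm hγi hm ht, ← hγi m hm]
    exact mem_image_of_mem _ (u_mem hk ht)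
  have hsub : ∀ m, m < k → Icc (c m) (c (m+1)) ⊆ Icc (0:ℝ) 1 := by
    intro m hm
    apply Icc_subset_Icc
    · rw [← hc0]; exact hcm (Nat.zero_le m)
    · rw [← hck]; exact hcm hm
  refine ⟨?_, ?_, ?_⟩
  · -- continuity
    have key : ∀ M, M ≤ k → ContinuousOn (glueFun k γ) (Icc 0 ((M:ℝ)/k)) := by
      intro M
      induction M with
      | zero =>
        intro _
        have h0 : ((0:ℕ):ℝ)/k = 0 := by simp
        rw [h0, Icc_self]
        exact continuousOn_singleton _ _
      | succ M ih =>
        intro hM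
        have hMk : M < k := hM
        have hcast : ((M+1:ℕ):ℝ)/k = ((M:ℝ)+1)/k := by push_cast; ring
        have h0M : (0:ℝ) ≤ (M:ℝ)/k := by positivity
        have hMM : (M:ℝ)/k ≤ ((M:ℝ)+1)/k :=
          div_le_div_of_nonneg_right (by linarith) hk'.le
        have hsplit : Icc (0:ℝ) (((M:ℝ)+1)/k) =
            Icc 0 ((M:ℝ)/k) ∪ Icc ((M:ℝ)/k) (((M:ℝ)+1)/k) :=
          (Icc_union_Icc_eq_Icc h0M hMM).symm
        rw [hcast, hsplit]
        refine continuousOn_union_closed isClosed_Icc isClosed_Icc (ih (le_of_lt hMk)) ?_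
        have hcont : ContinuousOn (fun t : ℝ => γ M ((k:ℝ)*t - (M:ℝ)))
            (Icc ((M:ℝ)/k) (((M:ℝ)+1)/k)) := by
          apply ContinuousOn.comp (hγc M hMk)
            (Continuous.continuousOn (by continuity))
          intro t ht
          exact u_mem hk ht
        exact hcont.congr fun t ht => glueFun_eval hk hγm hγi hMk ht
    have := key k le_rfl
    rwa [div_self hk'.ne'] at this
  · -- monotone
    intro t1 ht1 t2 ht2 h12
    obtain ⟨m1, hm1, hp1⟩ := mem_piece_of hk ht1
    obtain ⟨m2, hm2, hp2⟩ := mem_piece_of hk ht2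
    rcases lt_trichotomy m1 m2 with h | h | h
    · have b1 := (hbound m1 hm1 t1 hp1).2
      have b2 := (hbound m2 hm2 t2 hp2).1
      have hcc : c (m1+1) ≤ c m2 := hcm h
      linarith
    · subst h
      rw [glueFun_eval hk hγm hγi hm1 hp1, glueFun_eval hk hγm hγi hm1 hp2]
      exact hγm m1 hm1 (u_mem hk hp1) (u_mem hk hp2)
        (by have : (k:ℝ)*t1 ≤ (k:ℝ)*t2 := by nlinarith
            linarith)
    · have hle : t2 ≤ t1 := by
        have hcast : (m2:ℝ)+1 ≤ (m1:ℝ) := by exact_mod_cast h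
        have h1 : ((m2:ℝ)+1)/k ≤ (m1:ℝ)/k := by gcongr
        exact le_trans hp2.2 (le_trans h1 hp1.1)
      have heq : t1 = t2 := le_antisymm h12 hle
      rw [heq]
  · -- image
    apply Subset.antisymm
    · rintro y ⟨t, ht, rfl⟩
      obtain ⟨m, hm, hp⟩ := mem_piece_of hk ht
      exact hsub m hm (hbound m hm t hp)
    · intro y hy
      have hmono' : Monotone (fun m : ℕ => c (min m k)) :=
        fun x y' hxy => hcm (min_le_min hxy le_rfl)
      obtain ⟨m, hm, hy'⟩ := exists_piece _ hmono' k hk y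
        (by simpa [hc0, hck, min_self, Nat.zero_min] using hy)
      have hy'' : y ∈ Icc (c m) (c (m+1)) := by
        simpa [min_eq_left hm.le, min_eq_left (Nat.succ_le_of_lt hm)] using hy'
      rw [← hγi m hm] at hy''
      obtain ⟨u, hu, rfl⟩ := hy''
      have hm1k : (m:ℝ)+1 ≤ (k:ℝ) := by exact_mod_cast Nat.succ_le_of_lt hm
      have h0m : (0:ℝ) ≤ (m:ℝ) := Nat.cast_nonneg m
      refine ⟨((m:ℝ)+u)/k, ⟨by
        apply div_nonneg _ hk'.le
        linarith [hu.1], ?_⟩, ?_⟩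
      · rw [div_le_one hk']
        linarith [hu.2]
      · have hpt : ((m:ℝ)+u)/k ∈ Icc ((m:ℝ)/k) (((m:ℝ)+1)/k) := by
          constructor
          · exact div_le_div_of_nonneg_right (by linarith [hu.1]) hk'.le
          · exact div_le_div_of_nonneg_right (by linarith [hu.2]) hk'.le
        rw [glueFun_eval hk hγm hγi hm hpt]
        congr 1
        field_simp
        ring

lemma polyParam_norm_le (q : ℕ → E2) (N : ℕ) {x : ℝ} (hx0 : 0 ≤ x) (hxN : x ≤ N) :
    ‖polyParam q x‖ ≤ 3 * ∑ i ∈ Finset.range (N+2), ‖q i‖ := by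
  have hS0 : (0:ℝ) ≤ ∑ i ∈ Finset.range (N+2), ‖q i‖ :=
    Finset.sum_nonneg fun _ _ => norm_nonneg _
  have hS : ∀ i ≤ N+1, ‖q i‖ ≤ ∑ i ∈ Finset.range (N+2), ‖q i‖ := fun i hi =>
    Finset.single_le_sum (fun _ _ => norm_nonneg _) (Finset.mem_range.mpr (by omega))
  have haN : ⌊x⌋₊ ≤ N := by
    have := Nat.floor_le_floor hxN
    simpa using this
  have ha := hS ⌊x⌋₊ (by omega)
  have ha1 := hS (⌊x⌋₊+1) (by omega)
  have habs : |x - (⌊x⌋₊:ℝ)| ≤ 1 :=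
    abs_le.mpr ⟨by linarith [Nat.floor_le hx0], by linarith [Nat.lt_floor_add_one x]⟩
  have hns : ‖(x - (⌊x⌋₊:ℝ)) • (q (⌊x⌋₊+1) - q ⌊x⌋₊)‖ ≤ 1 * (‖q (⌊x⌋₊+1)‖ + ‖q ⌊x⌋₊‖) := by
    rw [norm_smul, Real.norm_eq_abs]
    exact mul_le_mul habs (norm_sub_le _ _) (norm_nonneg _) one_pos.le
  have hadd := norm_add_le (q ⌊x⌋₊) ((x - (⌊x⌋₊:ℝ)) • (q (⌊x⌋₊+1) - q ⌊x⌋₊))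
  unfold polyParam
  linarith

/-- Imai–Iri correctness under the Fréchet criterion: if every link of the
subsequence `p (j 0), …, p (j k)` has Fréchet distance at most `ε` to the
subpolyline of `P` it replaces, then the whole simplification has Fréchet
distance at most `ε` to `P` (with vertices `p 0, …, p n`). -/
theorem stmt_16 (p : ℕ → E2) (n k : ℕ) (hk : 0 < k) (ε : ℝ) (hε : 0 ≤ ε)
    (j : ℕ → ℕ) (hmono : StrictMonoOn j (Iic k)) (h0 : j 0 = 0) (hlast : j k = n)
    (hlinks : ∀ m < k, frechetDist (segCurve (p (j m)) (p (j (m + 1))))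
      (subcurve p (j m) (j (m + 1))) ≤ ε) :
    frechetDist (simplCurve p j k) (subcurve p 0 n) ≤ ε := by
  classical
  have hn : 0 < n := by
    have := hmono (show (0:ℕ) ∈ Iic k from mem_Iic.mpr (Nat.zero_le k))
      (show k ∈ Iic k from mem_Iic.mpr le_rfl) hk
    omega
  have hk' : (0:ℝ) < k := by exact_mod_cast hk
  have hn' : (0:ℝ) < n := by exact_mod_cast hn
  by_contra hcon
  push_neg at hcon
  set F := frechetDist (simplCurve p j k) (subcurve p 0 n) with hF
  set δ := (F - ε)/2 with hδdef
  have hδ : 0 < δ := by simp only [hδdef]; linarith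
  suffices h : F ≤ ε + δ by
    simp only [hδdef] at h; linarith
  -- per-link witnesses
  have hwit : ∀ m, ∃ r, ∃ a : ℝ → ℝ, ∃ b : ℝ → ℝ, m < k →
      IsRepar a ∧ IsRepar b ∧ r < ε + δ ∧
      ∀ t ∈ Icc (0:ℝ) 1,
        ‖segCurve (p (j m)) (p (j (m+1))) (a t) - subcurve p (j m) (j (m+1)) (b t)‖ ≤ r := by
    intro m
    by_cases hm : m < k
    · have hjle : j m ≤ j (m+1) :=
        (hmono (mem_Iic.mpr hm.le) (mem_Iic.mpr (Nat.succ_le_of_lt hm))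
          (Nat.lt_succ_self m)).le
      have hne : {r : ℝ | 0 ≤ r ∧ ∃ a b : ℝ → ℝ, IsRepar a ∧ IsRepar b ∧
          ∀ t ∈ Icc (0:ℝ) 1,
            ‖segCurve (p (j m)) (p (j (m+1))) (a t) -
              subcurve p (j m) (j (m+1)) (b t)‖ ≤ r}.Nonempty := by
        set S := ∑ i ∈ Finset.range (j (m+1) + 2), ‖p i‖ with hSdef
        have hS0 : 0 ≤ S := Finset.sum_nonneg fun _ _ => norm_nonneg _
        have hsingle : ∀ i ≤ j (m+1) + 1, ‖p i‖ ≤ S := fun i hi =>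
          Finset.single_le_sum (fun _ _ => norm_nonneg _) (Finset.mem_range.mpr (by omega))
        refine ⟨6*S, ⟨by positivity, fun x => x, fun x => x, isRepar_id', isRepar_id',
          fun t ht => ?_⟩⟩
        show ‖segCurve (p (j m)) (p (j (m+1))) t - subcurve p (j m) (j (m+1)) t‖ ≤ 6*S
        have hΔ : (0:ℝ) ≤ (j (m+1):ℝ) - (j m:ℝ) := by
          have : ((j m:ℕ):ℝ) ≤ ((j (m+1):ℕ):ℝ) := by exact_mod_cast hjle
          linarith
        have hf : ‖segCurve (p (j m)) (p (j (m+1))) t‖ ≤ 3*S := by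
          have h1 : ‖p (j m)‖ ≤ S := hsingle _ (by omega)
          have h2 : ‖p (j (m+1))‖ ≤ S := hsingle _ (by omega)
          have hb : ‖segCurve (p (j m)) (p (j (m+1))) t‖ ≤
              ‖p (j m)‖ + |t| * ‖p (j (m+1)) - p (j m)‖ := by
            refine (norm_add_le _ _).trans ?_
            rw [norm_smul, Real.norm_eq_abs]
          have habs : |t| ≤ 1 := abs_le.mpr ⟨by linarith [ht.1], ht.2⟩
          have hsub : ‖p (j (m+1)) - p (j m)‖ ≤ ‖p (j (m+1))‖ + ‖p (j m)‖ :=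
            norm_sub_le _ _
          nlinarith [abs_nonneg t, norm_nonneg (p (j (m+1)) - p (j m))]
        have hg : ‖subcurve p (j m) (j (m+1)) t‖ ≤ 3*S := by
          have harg0 : (0:ℝ) ≤ (j m:ℝ) + t * ((j (m+1):ℝ) - (j m:ℝ)) := by
            have h1 : (0:ℝ) ≤ (j m:ℝ) := Nat.cast_nonneg _
            nlinarith [ht.1]
          have hargN : (j m:ℝ) + t * ((j (m+1):ℝ) - (j m:ℝ)) ≤ (j (m+1):ℝ) := by
            nlinarith [ht.2, mul_nonneg (by linarith [ht.2] : (0:ℝ) ≤ 1 - t) hΔ]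
          have := polyParam_norm_le p (j (m+1)) harg0 hargN
          simpa [subcurve, ← hSdef] using this
        calc ‖segCurve (p (j m)) (p (j (m+1))) t - subcurve p (j m) (j (m+1)) t‖
            ≤ ‖segCurve (p (j m)) (p (j (m+1))) t‖ + ‖subcurve p (j m) (j (m+1)) t‖ :=
              norm_sub_le _ _
          _ ≤ 6*S := by linarith
      have hlt : frechetDist (segCurve (p (j m)) (p (j (m+1))))
          (subcurve p (j m) (j (m+1))) < ε + δ :=
        lt_of_le_of_lt (hlinks m hm) (by linarith)
      obtain ⟨r, hrmem, hrlt⟩ := exists_lt_of_csInf_lt hne hlt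
      obtain ⟨hr0, a, b, ha, hb, hbd⟩ := hrmem
      exact ⟨r, a, b, fun _ => ⟨ha, hb, hrlt, hbd⟩⟩
    · exact ⟨0, fun x => x, fun x => x, fun h => absurd h hm⟩
  choose r a b hw using hwit
  -- glued reparametrizations
  set γA : ℕ → ℝ → ℝ := fun m u => ((m:ℝ) + a m u)/k with hγAdef
  set cA : ℕ → ℝ := fun m => ((min m k : ℕ):ℝ)/k with hcAdef
  set γB : ℕ → ℝ → ℝ :=
    fun m u => ((j m:ℝ) + b m u * ((j (m+1):ℝ) - (j m:ℝ)))/n with hγBdef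
  set cB : ℕ → ℝ := fun m => ((j (min m k):ℕ):ℝ)/n with hcBdef
  have jmono : MonotoneOn j (Iic k) := hmono.monotoneOn
  -- hypotheses for A
  have hcA0 : cA 0 = 0 := by simp [hcAdef]
  have hcAk : cA k = 1 := by simp [hcAdef, div_self hk'.ne']
  have hcAm : Monotone cA := by
    intro x y hxy
    have hc : ((min x k : ℕ):ℝ) ≤ ((min y k : ℕ):ℝ) := by
      exact_mod_cast min_le_min hxy (le_refl k)
    exact div_le_div_of_nonneg_right hc hk'.le
  have hAc : ∀ m < k, ContinuousOn (γA m) (Icc 0 1) := fun m hm =>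
    ((continuousOn_const.add (hw m hm).1.1).div_const _)
  have hAm : ∀ m < k, MonotoneOn (γA m) (Icc 0 1) := by
    intro m hm u hu v hv huv
    have := (hw m hm).1.2.1 hu hv huv
    exact div_le_div_of_nonneg_right (by linarith) hk'.le
  have hAi : ∀ m < k, γA m '' Icc 0 1 = Icc (cA m) (cA (m+1)) := by
    intro m hm
    have h1 : γA m = (fun x => (1/(k:ℝ)) * x + (m:ℝ)/k) ∘ (a m) := by
      funext u
      simp only [hγAdef, Function.comp]
      field_simp
      ring
    rw [h1, image_comp, (hw m hm).1.2.2, image_affine_Icc' (by positivity : (0:ℝ) < 1/k)]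
    have hminm : min m k = m := min_eq_left hm.le
    have hminm1 : min (m+1) k = m+1 := min_eq_left (Nat.succ_le_of_lt hm)
    have e0 : (1/(k:ℝ)) * 0 + (m:ℝ)/k = cA m := by
      simp only [hcAdef, hminm]
      ring
    have e1 : (1/(k:ℝ)) * 1 + (m:ℝ)/k = cA (m+1) := by
      simp only [hcAdef, hminm1]
      push_cast
      field_simp
      ring
    rw [e0, e1]
  -- hypotheses for B
  have hcB0 : cB 0 = 0 := by simp [hcBdef, h0]
  have hcBk : cB k = 1 := by simp [hcBdef, hlast, div_self hn'.ne']
  have hcBm : Monotone cB := by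
    intro x y hxy
    have hmm : j (min x k) ≤ j (min y k) :=
      jmono (mem_Iic.mpr (min_le_right x k)) (mem_Iic.mpr (min_le_right y k))
        (min_le_min hxy (le_refl k))
    have hc : ((j (min x k):ℕ):ℝ) ≤ ((j (min y k):ℕ):ℝ) := by exact_mod_cast hmm
    exact div_le_div_of_nonneg_right hc hn'.le
  have hBc : ∀ m < k, ContinuousOn (γB m) (Icc 0 1) := fun m hm =>
    ((continuousOn_const.add ((hw m hm).2.1.1.mul continuousOn_const)).div_const _)
  have hΔpos : ∀ m < k, (0:ℝ) < (j (m+1):ℝ) - (j m:ℝ) := by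
    intro m hm
    have := hmono (mem_Iic.mpr hm.le) (mem_Iic.mpr (Nat.succ_le_of_lt hm))
      (Nat.lt_succ_self m)
    have hc : ((j m:ℕ):ℝ) < ((j (m+1):ℕ):ℝ) := by exact_mod_cast this
    linarith
  have hBm : ∀ m < k, MonotoneOn (γB m) (Icc 0 1) := by
    intro m hm u hu v hv huv
    have hbb := (hw m hm).2.1.2.1 hu hv huv
    have hΔ := (hΔpos m hm).le
    have : b m u * ((j (m+1):ℝ) - (j m:ℝ)) ≤ b m v * ((j (m+1):ℝ) - (j m:ℝ)) :=
      mul_le_mul_of_nonneg_right hbb hΔ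
    exact div_le_div_of_nonneg_right (by linarith) hn'.le
  have hBi : ∀ m < k, γB m '' Icc 0 1 = Icc (cB m) (cB (m+1)) := by
    intro m hm
    have h1 : γB m = (fun x => (((j (m+1):ℝ) - (j m:ℝ))/n) * x + (j m:ℝ)/n) ∘ (b m) := by
      funext u
      simp only [hγBdef, Function.comp]
      field_simp
      ring
    rw [h1, image_comp, (hw m hm).2.1.2.2,
      image_affine_Icc' (div_pos (hΔpos m hm) hn')]
    have hminm : min m k = m := min_eq_left hm.le
    have hminm1 : min (m+1) k = m+1 := min_eq_left (Nat.succ_le_of_lt hm)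
    have e0 : (((j (m+1):ℝ) - (j m:ℝ))/n) * 0 + (j m:ℝ)/n = cB m := by
      simp only [hcBdef, hminm]
      ring
    have e1 : (((j (m+1):ℝ) - (j m:ℝ))/n) * 1 + (j m:ℝ)/n = cB (m+1) := by
      simp only [hcBdef, hminm1]
      field_simp
      ring
    rw [e0, e1]
  have hArep : IsRepar (glueFun k γA) :=
    isRepar_glueFun hk hcA0 hcAk hcAm hAc hAm hAi
  have hBrep : IsRepar (glueFun k γB) :=
    isRepar_glueFun hk hcB0 hcBk hcBm hBc hBm hBi
  -- pointwise bound
  have hpt : ∀ t ∈ Icc (0:ℝ) 1,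
      ‖simplCurve p j k (glueFun k γA t) - subcurve p 0 n (glueFun k γB t)‖ ≤ ε + δ := by
    intro t ht
    obtain ⟨m, hm, hp⟩ := mem_piece_of hk ht
    have hGA : glueFun k γA t = γA m ((k:ℝ)*t - m) :=
      glueFun_eval hk hAm hAi hm hp
    have hGB : glueFun k γB t = γB m ((k:ℝ)*t - m) :=
      glueFun_eval hk hBm hBi hm hp
    set u := (k:ℝ)*t - m with hudef
    have humem : u ∈ Icc (0:ℝ) 1 := u_mem hk hp
    have hamem : a m u ∈ Icc (0:ℝ) 1 := IsRepar.mem (hw m hm).1 humem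
    have hxk : γA m u * k = (m:ℝ) + a m u := by
      simp only [hγAdef]
      field_simp
    have e1 : simplCurve p j k (glueFun k γA t) =
        segCurve (p (j m)) (p (j (m+1))) (a m u) := by
      rw [hGA]
      show polyParam (fun l => p (j (min l k))) (γA m u * k) = _
      rw [hxk, polyParam_add _ m hamem]
      simp [min_eq_left hm.le, min_eq_left (Nat.succ_le_of_lt hm), segCurve]
    have hxn : (0:ℝ) + γB m u * ((n:ℝ) - 0) =
        (j m:ℝ) + b m u * ((j (m+1):ℝ) - (j m:ℝ)) := by
      simp only [hγBdef]
      field_simp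
      ring
    have e2 : subcurve p 0 n (glueFun k γB t) =
        subcurve p (j m) (j (m+1)) (b m u) := by
      rw [hGB]
      simp only [subcurve]
      rw [hxn]
    rw [e1, e2]
    exact le_of_lt (lt_of_le_of_lt ((hw m hm).2.2.2 u humem) (hw m hm).2.2.1)
  -- conclude
  have hmem : (ε + δ) ∈ {r : ℝ | 0 ≤ r ∧ ∃ α β : ℝ → ℝ, IsRepar α ∧ IsRepar β ∧
      ∀ t ∈ Icc (0:ℝ) 1, ‖simplCurve p j k (α t) - subcurve p 0 n (β t)‖ ≤ r} :=
    ⟨by linarith, glueFun k γA, glueFun k γB, hArep, hBrep, hpt⟩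
  rw [hF]
  exact csInf_le ⟨0, fun x hx => hx.1⟩ hmem
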